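/- Let (A x ≤ b) ∪ (l ≤ D x ≤ u) be a split system with A ∈ ℚ^{m₁×n}, D ∈ ℚ^{m₂×n}, and n = n₁ + n₂. If the bounded part D x ≤ u has a mixed solution s (s ∈ ℚ^n with D s ≤ u and s_j ∈ ℤ for j > n₁), then the full system (A x ≤ b) ∪ (D x ≤ u) has a mixed solution s', i.e., there exists s' ∈ ℚ^n with A s' ≤ b, D s' ≤ u, and s'_j ∈ ℤ for j > n₁. -/

import Mathlib

open Matrix

theorem farkas_aux : ∀ (m : ℕ) {n : ℕ} (a : Fin m → (Fin n → ℚ)) (c : Fin n → ℚ),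
    (∀ x : Fin n → ℚ, (∀ i, a i ⬝ᵥ x ≤ 0) → c ⬝ᵥ x ≤ 0) →
    ∃ y : Fin m → ℚ, (∀ i, 0 ≤ y i) ∧ c = ∑ i, y i • a i := by
  intro m
  induction m with
  | zero =>
    intro n a c hc
    refine ⟨0, fun i => le_rfl, ?_⟩
    have h1 : c ⬝ᵥ c ≤ 0 := hc c (fun i => i.elim0)
    have h2 : 0 ≤ c ⬝ᵥ c := by
      simpa [dotProduct] using
        Finset.sum_nonneg (fun j (_ : j ∈ Finset.univ) => mul_self_nonneg (c j))
    have hc0 : c = 0 := dotProduct_self_eq_zero.mp (le_antisymm h1 h2)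
    simp [hc0]
  | succ m ih =>
    intro n a c hc
    set A : Fin m → Fin n → ℚ := fun i => a i.castSucc with hA
    set aa : Fin n → ℚ := a (Fin.last m) with haa
    by_cases hcase : ∀ x : Fin n → ℚ, (∀ i, A i ⬝ᵥ x ≤ 0) → c ⬝ᵥ x ≤ 0
    · obtain ⟨y, hy, hsum⟩ := ih A c hcase
      refine ⟨Fin.snoc y 0, ?_, ?_⟩
      · intro i
        refine Fin.lastCases ?_ ?_ i
        · simp
        · intro i; simpa using hy i
      · rw [Fin.sum_univ_castSucc]
        simpa using hsum
    · push_neg at hcase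
      obtain ⟨w, hw, hcw⟩ := hcase
      have haw : 0 < aa ⬝ᵥ w := by
        by_contra hle
        push_neg at hle
        have hall : ∀ i : Fin (m+1), a i ⬝ᵥ w ≤ 0 := by
          intro i
          refine Fin.lastCases ?_ ?_ i
          · exact hle
          · intro i; exact hw i
        exact absurd (hc w hall) (not_le.mpr hcw)
      have hawne : aa ⬝ᵥ w ≠ 0 := ne_of_gt haw
      set μ : Fin m → ℚ := fun i => (A i ⬝ᵥ w) / (aa ⬝ᵥ w) with hμ
      set ν : ℚ := (c ⬝ᵥ w) / (aa ⬝ᵥ w) with hν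
      set B : Fin m → Fin n → ℚ := fun i => A i - μ i • aa with hB
      set d : Fin n → ℚ := c - ν • aa with hd
      have key : ∀ x : Fin n → ℚ, (∀ i, B i ⬝ᵥ x ≤ 0) → d ⬝ᵥ x ≤ 0 := by
        intro x hx
        set xt : Fin n → ℚ := x - ((aa ⬝ᵥ x) / (aa ⬝ᵥ w)) • w with hxt
        have hdx : ∀ v : Fin n → ℚ, v ⬝ᵥ xt = v ⬝ᵥ x - (aa ⬝ᵥ x) / (aa ⬝ᵥ w) * (v ⬝ᵥ w) := by
          intro v
          rw [hxt, dotProduct_sub, dotProduct_smul]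
          ring_nf
        have hlast : aa ⬝ᵥ xt = 0 := by
          rw [hdx aa]; field_simp; ring
        have hcs : ∀ i : Fin m, A i ⬝ᵥ xt = B i ⬝ᵥ x := by
          intro i
          rw [hdx (A i), hB]
          simp only [sub_dotProduct, smul_dotProduct, smul_eq_mul, hμ]
          field_simp
        have hcxt : c ⬝ᵥ xt = d ⬝ᵥ x := by
          rw [hdx c, hd]
          simp only [sub_dotProduct, smul_dotProduct, smul_eq_mul, hν]
          field_simp
        have hall : ∀ i : Fin (m+1), a i ⬝ᵥ xt ≤ 0 := by
          intro i
          refine Fin.lastCases ?_ ?_ i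
          · exact le_of_eq hlast
          · intro i; rw [show a i.castSucc = A i from rfl, hcs i]; exact hx i
        have := hc xt hall
        rwa [hcxt] at this
      obtain ⟨y, hy, hsum⟩ := ih B d key
      have hμle : ∀ i, μ i ≤ 0 := fun i => div_nonpos_iff.mpr (Or.inr ⟨hw i, haw.le⟩)
      have hνpos : 0 < ν := div_pos hcw haw
      set lastc : ℚ := ν - ∑ i, y i * μ i with hlastc
      have hlastc_nonneg : 0 ≤ lastc := by
        have : ∑ i, y i * μ i ≤ 0 :=
          Finset.sum_nonpos (fun i _ => mul_nonpos_iff.mpr (Or.inl ⟨hy i, hμle i⟩))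
        simp only [hlastc]
        linarith
      refine ⟨Fin.snoc y lastc, ?_, ?_⟩
      · intro i
        refine Fin.lastCases ?_ ?_ i
        · simpa using hlastc_nonneg
        · intro i; simpa using hy i
      · rw [Fin.sum_univ_castSucc]
        simp only [Fin.snoc_castSucc, Fin.snoc_last]
        have : c = d + ν • aa := by rw [hd]; abel
        rw [this, hsum, hB]
        rw [show (∑ i, y i • (A i - μ i • aa)) = (∑ i, y i • A i) - (∑ i, y i * μ i) • aa by
          rw [Finset.sum_smul, ← Finset.sum_sub_distrib]
          congr 1
          funext i
          rw [smul_sub, smul_smul]]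
        rw [hlastc, sub_smul]
        abel

lemma dotProduct_sum' {n : ℕ} {ι : Type*} (s : Finset ι) (v : Fin n → ℚ) (f : ι → Fin n → ℚ) :
    v ⬝ᵥ (∑ i ∈ s, f i) = ∑ i ∈ s, v ⬝ᵥ f i := by
  simp only [dotProduct, Finset.sum_apply, Finset.mul_sum]
  exact Finset.sum_comm

lemma den_mul_self (q : ℚ) : (q.den : ℚ) * q = (q.num : ℚ) := by
  have hd : ((q.den : ℚ)) ≠ 0 := by exact_mod_cast q.den_nz
  rw [mul_comm, ← eq_div_iff hd]
  exact (Rat.num_div_den q).symm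

/-- Direction `h ≠ 0` is bounded in the constraint system `A x ≤ b`: there exist
`l, u ∈ ℚ` such that `A x ≤ b` implies `hᵀ x ≤ u` and `−hᵀ x ≤ −l`. -/
def Bounded {ι : Type} [Fintype ι] {n : ℕ} (A : Matrix ι (Fin n) ℚ) (b : ι → ℚ)
    (h : Fin n → ℚ) : Prop :=
  ∃ l u : ℚ, (∀ x : Fin n → ℚ, A.mulVec x ≤ b → h ⬝ᵥ x ≤ u) ∧
    (∀ x : Fin n → ℚ, A.mulVec x ≤ b → (-h) ⬝ᵥ x ≤ -l)

/-- `(A x ≤ b) ∪ (l ≤ D x ≤ u)` is a split system: all rows are nonzero,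
the part `D x ≤ u` is double-bounded, all nonzero directions are unbounded in
`A x ≤ b`, and every row of `A` is unbounded in the combined system. -/
lemma exists_ray {m₁ m₂ n : ℕ} (A : Matrix (Fin m₁) (Fin n) ℚ) (b : Fin m₁ → ℚ)
    (D : Matrix (Fin m₂) (Fin n) ℚ) (u : Fin m₂ → ℚ) (i : Fin m₁)
    (hub : ¬ Bounded (Matrix.fromRows A D) (Sum.elim b u) (A i)) :
    ∃ z : Fin n → ℚ, (∀ k, A k ⬝ᵥ z ≤ 0) ∧ (∀ k, D k ⬝ᵥ z ≤ 0) ∧ A i ⬝ᵥ z < 0 := by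
  by_contra hno
  push_neg at hno
  apply hub
  set rows : Fin (m₁ + m₂) → Fin n → ℚ :=
    fun k => Sum.elim (fun j => A j) (fun j => D j) (finSumFinEquiv.symm k) with hrows
  set dd : Fin (m₁ + m₂) → ℚ := fun k => Sum.elim b u (finSumFinEquiv.symm k) with hdd
  have hyp : ∀ x : Fin n → ℚ, (∀ k, rows k ⬝ᵥ x ≤ 0) → (-(A i)) ⬝ᵥ x ≤ 0 := by
    intro x hx
    have h1 : ∀ k : Fin m₁, A k ⬝ᵥ x ≤ 0 := fun k => by
      simpa [hrows] using hx (finSumFinEquiv (Sum.inl k))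
    have h2 : ∀ k : Fin m₂, D k ⬝ᵥ x ≤ 0 := fun k => by
      simpa [hrows] using hx (finSumFinEquiv (Sum.inr k))
    have h3 := hno x h1 h2
    rw [neg_dotProduct]
    linarith
  obtain ⟨y, hy, hsum⟩ := farkas_aux _ rows (-(A i)) hyp
  refine ⟨-(∑ k, y k * dd k), b i, ?_, ?_⟩
  · intro x hx
    have := hx (Sum.inl i)
    simpa [Matrix.fromRows_mulVec, Matrix.mulVec] using this
  · intro x hx
    have hfeas : ∀ k : Fin (m₁ + m₂), rows k ⬝ᵥ x ≤ dd k := by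
      intro k
      have := hx (finSumFinEquiv.symm k)
      rcases h : finSumFinEquiv.symm k with j | j <;>
        simpa [hrows, hdd, h, Matrix.fromRows_mulVec, Matrix.mulVec] using hx (finSumFinEquiv.symm k)
    have : (-(A i)) ⬝ᵥ x = ∑ k, y k * (rows k ⬝ᵥ x) := by
      rw [hsum]
      simp [dotProduct, Finset.sum_mul, Finset.mul_sum]
      rw [Finset.sum_comm]
      congr 1; funext k; congr 1; funext j; ring
    rw [this, neg_neg]
    exact Finset.sum_le_sum (fun k _ => mul_le_mul_of_nonneg_left (hfeas k) (hy k))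

def SplitSystem {m₁ m₂ n : ℕ} (A : Matrix (Fin m₁) (Fin n) ℚ) (b : Fin m₁ → ℚ)
    (D : Matrix (Fin m₂) (Fin n) ℚ) (u : Fin m₂ → ℚ) : Prop :=
  (∀ i : Fin m₁, A i ≠ 0) ∧ (∀ i : Fin m₂, D i ≠ 0) ∧
  (∃ l : Fin m₂ → ℚ, ∀ x : Fin n → ℚ, D.mulVec x ≤ u → ∀ i : Fin m₂, l i ≤ D.mulVec x i) ∧
  (∀ h : Fin n → ℚ, h ≠ 0 → ¬ Bounded A b h) ∧
  (∀ i : Fin m₁, ¬ Bounded (Matrix.fromRows A D) (Sum.elim b u) (A i))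

/-- Mixed Extension: in a split system over `n = n₁ + n₂` variables (the last `n₂`
being integer), if the bounded part `D x ≤ u` has a mixed solution `s`, then the
full system `(A x ≤ b) ∪ (D x ≤ u)` has a mixed solution `s'`. -/
theorem mixed_extension {m₁ m₂ n₁ n₂ : ℕ}
    (A : Matrix (Fin m₁) (Fin (n₁ + n₂)) ℚ) (b : Fin m₁ → ℚ)
    (D : Matrix (Fin m₂) (Fin (n₁ + n₂)) ℚ) (u : Fin m₂ → ℚ)
    (hsplit : SplitSystem A b D u)
    (s : Fin (n₁ + n₂) → ℚ) (hs : D.mulVec s ≤ u)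
    (hsint : ∀ j : Fin (n₁ + n₂), n₁ ≤ (j : ℕ) → ∃ z : ℤ, s j = (z : ℚ)) :
    ∃ s' : Fin (n₁ + n₂) → ℚ, A.mulVec s' ≤ b ∧ D.mulVec s' ≤ u ∧
      ∀ j : Fin (n₁ + n₂), n₁ ≤ (j : ℕ) → ∃ z : ℤ, s' j = (z : ℚ) := by
  obtain ⟨-, -, -, -, hrows⟩ := hsplit
  have hz : ∀ i : Fin m₁, ∃ z : Fin (n₁ + n₂) → ℚ,
      (∀ k, A k ⬝ᵥ z ≤ 0) ∧ (∀ k, D k ⬝ᵥ z ≤ 0) ∧ A i ⬝ᵥ z < 0 :=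
    fun i => exists_ray A b D u i (hrows i)
  choose z hz1 hz2 hz3 using hz
  set Z : Fin (n₁ + n₂) → ℚ := ∑ i, z i with hZ
  have hAZ : ∀ j, A j ⬝ᵥ Z < 0 := by
    intro j
    rw [hZ, dotProduct_sum']
    calc ∑ i, A j ⬝ᵥ z i < ∑ _i : Fin m₁, (0:ℚ) :=
          Finset.sum_lt_sum (fun i _ => hz1 i j) ⟨j, Finset.mem_univ j, hz3 j⟩
      _ = 0 := by simp
  have hDZ : ∀ j, D j ⬝ᵥ Z ≤ 0 := by
    intro j
    rw [hZ, dotProduct_sum']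
    exact Finset.sum_nonpos (fun i _ => hz2 i j)
  set K : ℕ := ∏ j : Fin (n₁ + n₂), (Z j).den with hKdef
  have hK1 : (1:ℚ) ≤ (K:ℚ) := by
    have : 1 ≤ K := Finset.one_le_prod' (fun j _ => (Z j).pos)
    exact_mod_cast this
  set r : Fin m₁ → ℚ := fun j => (A.mulVec s j - b j) / (-(A j ⬝ᵥ Z)) with hr
  set N : ℕ := Finset.univ.sup (fun j => ⌈r j⌉₊) with hN
  set t : ℚ := (N : ℚ) * (K : ℚ) with ht
  have ht0 : (0:ℚ) ≤ t := by positivity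
  have htr : ∀ j, r j ≤ t := by
    intro j
    calc r j ≤ (⌈r j⌉₊ : ℚ) := Nat.le_ceil _
      _ ≤ (N : ℚ) := by
          have h : ⌈r j⌉₊ ≤ N := Finset.le_sup (f := fun j => ⌈r j⌉₊) (Finset.mem_univ j)
          exact_mod_cast h
      _ ≤ t := le_mul_of_one_le_right (Nat.cast_nonneg N) hK1
  refine ⟨s + t • Z, ?_, ?_, ?_⟩
  · intro j
    have hmv : A.mulVec (s + t • Z) j = A.mulVec s j + t * (A j ⬝ᵥ Z) := by
      rw [Matrix.mulVec_add, Matrix.mulVec_smul]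
      simp [Matrix.mulVec, smul_eq_mul]
    have h1 : t * (A j ⬝ᵥ Z) ≤ r j * (A j ⬝ᵥ Z) :=
      mul_le_mul_of_nonpos_right (htr j) (hAZ j).le
    have h2 : r j * (A j ⬝ᵥ Z) = -(A.mulVec s j - b j) := by
      rw [hr]
      have hne : -(A j ⬝ᵥ Z) ≠ 0 := neg_ne_zero.mpr (ne_of_lt (hAZ j))
      rw [div_mul_eq_mul_div, div_eq_iff hne]
      ring
    rw [hmv]
    simp only [Pi.add_apply] at *
    linarith
  · intro j
    have hmv : D.mulVec (s + t • Z) j = D.mulVec s j + t * (D j ⬝ᵥ Z) := by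
      rw [Matrix.mulVec_add, Matrix.mulVec_smul]
      simp [Matrix.mulVec, smul_eq_mul]
    rw [hmv]
    have h1 : t * (D j ⬝ᵥ Z) ≤ 0 := mul_nonpos_iff.mpr (Or.inl ⟨ht0, hDZ j⟩)
    have := hs j
    linarith
  · intro j hj
    obtain ⟨zs, hzs⟩ := hsint j hj
    refine ⟨zs + (N : ℤ) * ((∏ j' ∈ Finset.univ.erase j, ((Z j').den : ℤ)) * (Z j).num), ?_⟩
    have happ : (s + t • Z) j = s j + t * Z j := rfl
    have hKsplit : (K : ℚ) = ((Z j).den : ℚ) * ((∏ j' ∈ Finset.univ.erase j, ((Z j').den : ℕ)) : ℚ) := by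
      rw [hKdef]
      rw [← Finset.mul_prod_erase Finset.univ _ (Finset.mem_univ j)]
      push_cast
      ring
    have hden := den_mul_self (Z j)
    have : t * Z j = (N : ℚ) * (((∏ j' ∈ Finset.univ.erase j, ((Z j').den : ℕ)) : ℚ) * ((Z j).num : ℚ)) := by
      rw [ht, hKsplit]
      calc (N:ℚ) * (((Z j).den : ℚ) * ((∏ j' ∈ Finset.univ.erase j, ((Z j').den : ℕ)) : ℚ)) * Z j
          = (N:ℚ) * (((∏ j' ∈ Finset.univ.erase j, ((Z j').den : ℕ)) : ℚ) * (((Z j).den : ℚ) * Z j)) := by ring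
        _ = (N:ℚ) * (((∏ j' ∈ Finset.univ.erase j, ((Z j').den : ℕ)) : ℚ) * ((Z j).num : ℚ)) := by rw [hden]
    rw [happ, hzs, this]
    push_cast
    ring
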